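/- For the cycle graph Cₙ on n ≥ 3 vertices, the F-coindices of the derived graphs are: F̄(L(Cₙ)) = 4n(n-3), F̄(S(Cₙ)) = 8n(2n-3), F̄(T₁(Cₙ)) = 4n(10n-23), F̄(T₂(Cₙ)) = 4n(10n-23), F̄(T(Cₙ)) = 32n(2n-5), F̄(PL(Cₙ)) = 8n(2n-3). -/

import Mathlib

open SimpleGraph Finset
open scoped Classical

noncomputable section
namespace Paper

variable {V : Type*} [Fintype V]

/-- Degree as an integer. -/
def d (G : SimpleGraph V) (v : V) : ℤ := G.degree v

/-- Number of edges. -/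
def m (G : SimpleGraph V) : ℤ := G.edgeFinset.card

/-- Sum over unordered edges of a symmetric vertex-pair function. -/
def edgeSum (G : SimpleGraph V) (f : V → V → ℤ) (hf : ∀ u v, f u v = f v u) : ℤ :=
  ∑ e ∈ G.edgeFinset, Sym2.lift ⟨f, hf⟩ e

/-- First Zagreb index. -/
def M1 (G : SimpleGraph V) : ℤ := ∑ v, d G v ^ 2

/-- Second Zagreb index. -/
def M2 (G : SimpleGraph V) : ℤ :=
  edgeSum G (fun u v => d G u * d G v) (by intros; ring)

/-- F-index. -/
def F (G : SimpleGraph V) : ℤ := ∑ v, d G v ^ 3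

/-- ξ₄. -/
def xi4 (G : SimpleGraph V) : ℤ := ∑ v, d G v ^ 4

/-- Redefined third Zagreb index. -/
def ReZG3 (G : SimpleGraph V) : ℤ :=
  edgeSum G (fun u v => d G u * d G v * (d G u + d G v)) (by intros; ring)

/-- F-coindex: sum over edges of the complement with degrees in G. -/
def Fbar (G : SimpleGraph V) : ℤ :=
  edgeSum Gᶜ (fun u v => d G u ^ 2 + d G v ^ 2) (by intros; ring)

/-- Subdivision graph. -/
def subdivision (G : SimpleGraph V) : SimpleGraph (V ⊕ G.edgeSet) where
  Adj x y :=
    match x, y with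
    | Sum.inl u, Sum.inr e => u ∈ (e : Sym2 V)
    | Sum.inr e, Sum.inl u => u ∈ (e : Sym2 V)
    | _, _ => False
  symm := by constructor; rintro (u | e) (v | f) h <;> first | exact h | exact h.elim
  loopless := by constructor; rintro (u | e) <;> simp

/-- Vertex-semitotal graph. -/
def vertexSemitotal (G : SimpleGraph V) : SimpleGraph (V ⊕ G.edgeSet) where
  Adj x y :=
    match x, y with
    | Sum.inl u, Sum.inl v => G.Adj u v
    | Sum.inl u, Sum.inr e => u ∈ (e : Sym2 V)
    | Sum.inr e, Sum.inl u => u ∈ (e : Sym2 V)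
    | _, _ => False
  symm := by
    constructor
    rintro (u | e) (v | f) h
    · exact G.adj_symm h
    · exact h
    · exact h
    · exact h.elim
  loopless := by
    constructor
    rintro (u | e) h
    · exact G.loopless.irrefl u h
    · exact h

/-- Edge-semitotal graph. -/
def edgeSemitotal (G : SimpleGraph V) : SimpleGraph (V ⊕ G.edgeSet) where
  Adj x y :=
    match x, y with
    | Sum.inl u, Sum.inr e => u ∈ (e : Sym2 V)
    | Sum.inr e, Sum.inl u => u ∈ (e : Sym2 V)
    | Sum.inr e, Sum.inr f => e ≠ f ∧ ∃ v, v ∈ (e : Sym2 V) ∧ v ∈ (f : Sym2 V)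
    | _, _ => False
  symm := by
    constructor
    rintro (u | e) (v | f) h
    · exact h.elim
    · exact h
    · exact h
    · obtain ⟨hne, w, h1, h2⟩ := h
      exact ⟨hne.symm, w, h2, h1⟩
  loopless := by
    constructor
    rintro (u | e) h
    · exact h
    · exact h.1 rfl

/-- Total graph. -/
def total (G : SimpleGraph V) : SimpleGraph (V ⊕ G.edgeSet) where
  Adj x y :=
    match x, y with
    | Sum.inl u, Sum.inl v => G.Adj u v
    | Sum.inl u, Sum.inr e => u ∈ (e : Sym2 V)
    | Sum.inr e, Sum.inl u => u ∈ (e : Sym2 V)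
    | Sum.inr e, Sum.inr f => e ≠ f ∧ ∃ v, v ∈ (e : Sym2 V) ∧ v ∈ (f : Sym2 V)
  symm := by
    constructor
    rintro (u | e) (v | f) h
    · exact G.adj_symm h
    · exact h
    · exact h
    · obtain ⟨hne, w, h1, h2⟩ := h
      exact ⟨hne.symm, w, h2, h1⟩
  loopless := by
    constructor
    rintro (u | e) h
    · exact G.loopless.irrefl u h
    · exact h.1 rfl

/-- Paraline graph: line graph of the subdivision graph. -/
def paraline (G : SimpleGraph V) : SimpleGraph (subdivision G).edgeSet :=
  (subdivision G).lineGraph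


lemma two_mul_edgeSum {W : Type*} [Fintype W] (H : SimpleGraph W)
    (f : W → W → ℤ) (hf : ∀ u v, f u v = f v u) :
    2 * edgeSum H f hf = ∑ v, ∑ w ∈ H.neighborFinset v, f v w := by
  classical
  have h1 : ∑ d : H.Dart, f d.fst d.snd = 2 * edgeSum H f hf := by
    rw [edgeSum, ← Finset.sum_fiberwise_of_maps_to
      (g := SimpleGraph.Dart.edge) (t := H.edgeFinset)
      (fun d _ => by simp [SimpleGraph.mem_edgeFinset, d.edge_mem]), Finset.mul_sum]
    refine Finset.sum_congr rfl fun e he => ?_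
    have hcard : #({d : H.Dart | d.edge = e} : Finset _) = 2 :=
      H.dart_edge_fiber_card e (by rwa [← SimpleGraph.mem_edgeFinset])
    calc ∑ d ∈ ({d : H.Dart | d.edge = e} : Finset _), f d.fst d.snd
        = ∑ d ∈ ({d : H.Dart | d.edge = e} : Finset _), Sym2.lift ⟨f, hf⟩ e := by
          refine Finset.sum_congr rfl fun d hd => ?_
          simp only [Finset.mem_filter] at hd
          rw [← hd.2]
          rfl
      _ = 2 * Sym2.lift ⟨f, hf⟩ e := by rw [Finset.sum_const, hcard]; ring
  have h2 : ∑ d : H.Dart, f d.fst d.snd = ∑ v, ∑ w ∈ H.neighborFinset v, f v w := by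
    rw [← Finset.sum_fiberwise_of_maps_to
      (g := fun d : H.Dart => d.fst) (t := (Finset.univ : Finset W))
      (fun d _ => Finset.mem_univ _)]
    refine Finset.sum_congr rfl fun v _ => ?_
    rw [show (Finset.univ.filter fun d : H.Dart => d.fst = v)
        = ({d : H.Dart | d.fst = v} : Finset _) from rfl, H.dart_fst_fiber v,
      Finset.sum_image (fun a _ b _ h => H.dartOfNeighborSet_injective v h)]
    rw [← Finset.sum_coe_sort (H.neighborFinset v) (fun w => f v w)]
    refine Finset.sum_nbij' (fun w => (⟨(w : W), (H.mem_neighborFinset v _).mpr w.2⟩ : H.neighborFinset v))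
      (fun w => ⟨(w : W), (H.mem_neighborFinset v _).mp w.2⟩)
      (by intros; simp) (by intros; simp) (by intros; rfl) (by intros; rfl) (fun w _ => rfl)
  rw [← h1, h2]
lemma edgeSum_add {W : Type*} [Fintype W] (H : SimpleGraph W) (g : W → ℤ) :
    edgeSum H (fun u v => g u + g v) (by intros; ring) = ∑ v, (H.degree v : ℤ) * g v := by
  classical
  have key := two_mul_edgeSum H (fun u v => g u + g v) (by intros; ring)
  have hswap : ∑ v, ∑ w ∈ H.neighborFinset v, g w = ∑ w, (H.degree w : ℤ) * g w := by
    have : ∀ v, ∑ w ∈ H.neighborFinset v, g w = ∑ w, if H.Adj v w then g w else 0 := by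
      intro v
      rw [neighborFinset_eq_filter, Finset.sum_filter]
    simp only [this]
    rw [Finset.sum_comm]
    refine Finset.sum_congr rfl fun w _ => ?_
    rw [← Finset.sum_filter, Finset.sum_const,
      show (Finset.univ.filter fun v => H.Adj v w) = Finset.univ.filter (H.Adj w ·) from
        Finset.filter_congr (fun v _ => by rw [adj_comm]),
      ← neighborFinset_eq_filter]
    rw [nsmul_eq_mul]
    rfl
  have h2 : 2 * edgeSum H (fun u v => g u + g v) (by intros; ring)
      = 2 * ∑ v, (H.degree v : ℤ) * g v := by
    rw [key]
    simp only [Finset.sum_add_distrib, Finset.sum_const]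
    have hh : ∑ v, #(H.neighborFinset v) • g v = ∑ v, (H.degree v : ℤ) * g v := by
      refine Finset.sum_congr rfl fun v _ => ?_
      rw [nsmul_eq_mul]
      rfl
    rw [hh, hswap]
    ring
  exact mul_left_cancel₀ (by norm_num) h2

lemma Fbar_eq {W : Type*} [Fintype W] (H : SimpleGraph W) :
    Fbar H = ∑ w, ((Fintype.card W : ℤ) - 1 - d H w) * (d H w) ^ 2 := by
  classical
  have : Fbar H = edgeSum Hᶜ (fun u v => (d H u ^ 2) + (d H v ^ 2)) (by intros; ring) := rfl
  rw [this, edgeSum_add Hᶜ (fun v => d H v ^ 2)]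
  refine Finset.sum_congr rfl fun w _ => ?_
  have h2 : H.degree w < Fintype.card W := H.degree_lt_card_verts w
  simp only [d]
  congr 1
  simp only [degree_compl]
  omega
lemma card_filter_sum_type {α β : Type*} [Fintype α] [Fintype β] (p : α ⊕ β → Prop) :
    #(Finset.univ.filter p)
      = #(Finset.univ.filter fun a => p (Sum.inl a))
        + #(Finset.univ.filter fun b => p (Sum.inr b)) := by
  classical
  rw [← Finset.card_disjSum]
  congr 1
  ext x
  cases x <;> simp [Finset.mem_disjSum]

lemma card_filter_mem_edge {W : Type*} [Fintype W] (H : SimpleGraph W) (u : W) :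
    #(Finset.univ.filter fun f : H.edgeSet => u ∈ (f : Sym2 W)) = H.degree u := by
  classical
  rw [← card_incidenceFinset_eq_degree]
  refine Finset.card_bij (fun f _ => (f : Sym2 W)) ?_ ?_ ?_
  · rintro ⟨f, hf⟩ h
    simp only [Finset.mem_filter] at h
    rw [mem_incidenceFinset]
    exact ⟨hf, h.2⟩
  · rintro ⟨f, hf⟩ _ ⟨g, hg⟩ _ h
    simpa using h
  · intro e he
    rw [mem_incidenceFinset] at he
    exact ⟨⟨e, he.1⟩, by simp [he.2], rfl⟩

lemma card_filter_shares {W : Type*} [Fintype W] (H : SimpleGraph W) (u v : W)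
    (h : H.Adj u v) :
    #(Finset.univ.filter fun f : H.edgeSet =>
        (⟨s(u,v), h⟩ : H.edgeSet) ≠ f ∧ ∃ w, w ∈ (s(u,v) : Sym2 W) ∧ w ∈ (f : Sym2 W))
      = H.degree u + H.degree v - 2 := by
  classical
  have hne : u ≠ v := h.ne
  have hmem : s(u,v) ∈ (H.incidenceFinset u ∪ H.incidenceFinset v) := by
    rw [Finset.mem_union, mem_incidenceFinset]
    exact Or.inl ⟨h, Sym2.mem_mk_left u v⟩
  have hinter : H.incidenceFinset u ∩ H.incidenceFinset v = {s(u,v)} := by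
    ext e
    simp only [Finset.mem_inter, mem_incidenceFinset, Finset.mem_singleton]
    constructor
    · rintro ⟨⟨he, hu⟩, ⟨_, hv⟩⟩
      exact (Sym2.mem_and_mem_iff hne).mp ⟨hu, hv⟩
    · rintro rfl
      exact ⟨⟨h, Sym2.mem_mk_left u v⟩, ⟨h, Sym2.mem_mk_right u v⟩⟩
  have hcard : #((H.incidenceFinset u ∪ H.incidenceFinset v).erase s(u,v))
      = H.degree u + H.degree v - 2 := by
    rw [Finset.card_erase_of_mem hmem]
    have := Finset.card_union_add_card_inter (H.incidenceFinset u) (H.incidenceFinset v)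
    rw [hinter, Finset.card_singleton, card_incidenceFinset_eq_degree,
      card_incidenceFinset_eq_degree] at this
    omega
  rw [← hcard]
  refine Finset.card_bij (fun f _ => (f : Sym2 W)) ?_ ?_ ?_
  · rintro ⟨f, hf⟩ hmf
    simp only [Finset.mem_filter] at hmf
    obtain ⟨-, hne', w, hw1, hw2⟩ := hmf
    rw [Finset.mem_erase]
    constructor
    · intro hc
      exact hne' (Subtype.ext hc.symm)
    · rw [Finset.mem_union, mem_incidenceFinset, mem_incidenceFinset]
      rw [Sym2.mem_iff] at hw1
      rcases hw1 with rfl | rfl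
      · exact Or.inl ⟨hf, hw2⟩
      · exact Or.inr ⟨hf, hw2⟩
  · rintro ⟨f, hf⟩ _ ⟨g, hg⟩ _ hfg
    simpa using hfg
  · intro e he
    rw [Finset.mem_erase, Finset.mem_union, mem_incidenceFinset, mem_incidenceFinset] at he
    obtain ⟨hne', hor⟩ := he
    have hedge : e ∈ H.edgeSet := by rcases hor with ⟨he, _⟩ | ⟨he, _⟩ <;> exact he
    refine ⟨⟨e, hedge⟩, ?_, rfl⟩
    simp only [Finset.mem_filter, Finset.mem_univ, true_and]
    refine ⟨fun hc => hne' (congrArg Subtype.val hc).symm, ?_⟩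
    rcases hor with ⟨_, hu⟩ | ⟨_, hv⟩
    · exact ⟨u, Sym2.mem_mk_left u v, hu⟩
    · exact ⟨v, Sym2.mem_mk_right u v, hv⟩

lemma card_filter_mem_sym2 {W : Type*} [Fintype W] {u v : W} (hne : u ≠ v) :
    #(Finset.univ.filter fun w : W => w ∈ (s(u,v) : Sym2 W)) = 2 := by
  classical
  have : (Finset.univ.filter fun w : W => w ∈ (s(u,v) : Sym2 W)) = {u, v} := by
    ext w
    simp [Sym2.mem_iff]
  rw [this, Finset.card_pair hne]
lemma degree_eq_card_filter {W : Type*} [Fintype W] (H : SimpleGraph W) (x : W) :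
    H.degree x = #(Finset.univ.filter (H.Adj x ·)) := by
  classical
  rw [degree, neighborFinset_eq_filter]

lemma lineGraph_degree {W : Type*} [Fintype W] (H : SimpleGraph W) (u v : W) (h : H.Adj u v) :
    H.lineGraph.degree (⟨s(u,v), h⟩ : H.edgeSet) = H.degree u + H.degree v - 2 := by
  classical
  rw [degree_eq_card_filter, ← card_filter_shares H u v h]
  congr 1
  refine Finset.filter_congr fun f _ => ?_
  rw [lineGraph_adj_iff_exists]

lemma subdivision_degree_inl {W : Type*} [Fintype W] (G : SimpleGraph W) (u : W) :
    (subdivision G).degree (Sum.inl u) = G.degree u := by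
  classical
  rw [degree_eq_card_filter, card_filter_sum_type]
  have h1 : #(Finset.univ.filter fun a : W => (subdivision G).Adj (.inl u) (.inl a)) = 0 := by
    rw [Finset.card_eq_zero]
    ext a
    exact ⟨fun h => False.elim (Finset.mem_filter.mp h).2, fun h => absurd h (Finset.notMem_empty a)⟩
  have h2 : #(Finset.univ.filter fun e : G.edgeSet => (subdivision G).Adj (.inl u) (.inr e))
      = G.degree u := by
    rw [← card_filter_mem_edge G u]
    congr 1
    exact Finset.filter_congr fun f _ => by simp [subdivision]
  rw [h1, h2]
  omega

lemma subdivision_degree_inr {W : Type*} [Fintype W] (G : SimpleGraph W) (u v : W)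
    (h : G.Adj u v) :
    (subdivision G).degree (Sum.inr (⟨s(u,v), h⟩ : G.edgeSet)) = 2 := by
  classical
  rw [degree_eq_card_filter, card_filter_sum_type]
  have h1 : #(Finset.univ.filter fun a : W => (subdivision G).Adj (.inr ⟨s(u,v), h⟩) (.inl a))
      = 2 := by
    rw [← card_filter_mem_sym2 h.ne]
    congr 1
    exact Finset.filter_congr fun a _ => by simp [subdivision]
  have h2 : #(Finset.univ.filter fun e : G.edgeSet =>
      (subdivision G).Adj (.inr ⟨s(u,v), h⟩) (.inr e)) = 0 := by
    rw [Finset.card_eq_zero]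
    ext a
    exact ⟨fun h => False.elim (Finset.mem_filter.mp h).2, fun h => absurd h (Finset.notMem_empty a)⟩
  rw [h1, h2]
lemma vertexSemitotal_degree_inl {W : Type*} [Fintype W] (G : SimpleGraph W) (u : W) :
    (vertexSemitotal G).degree (Sum.inl u) = 2 * G.degree u := by
  classical
  rw [degree_eq_card_filter, card_filter_sum_type]
  have h1 : #(Finset.univ.filter fun a : W => (vertexSemitotal G).Adj (.inl u) (.inl a))
      = G.degree u := by
    rw [degree_eq_card_filter]
    congr 1
  have h2 : #(Finset.univ.filter fun e : G.edgeSet => (vertexSemitotal G).Adj (.inl u) (.inr e))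
      = G.degree u := by
    rw [← card_filter_mem_edge G u]
    congr 1
    exact Finset.filter_congr fun f _ => by simp [vertexSemitotal]
  rw [h1, h2]
  omega

lemma vertexSemitotal_degree_inr {W : Type*} [Fintype W] (G : SimpleGraph W) (u v : W)
    (h : G.Adj u v) :
    (vertexSemitotal G).degree (Sum.inr (⟨s(u,v), h⟩ : G.edgeSet)) = 2 := by
  classical
  rw [degree_eq_card_filter, card_filter_sum_type]
  have h1 : #(Finset.univ.filter fun a : W =>
      (vertexSemitotal G).Adj (.inr ⟨s(u,v), h⟩) (.inl a)) = 2 := by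
    rw [← card_filter_mem_sym2 h.ne]
    congr 1
    exact Finset.filter_congr fun a _ => by simp [vertexSemitotal]
  have h2 : #(Finset.univ.filter fun e : G.edgeSet =>
      (vertexSemitotal G).Adj (.inr ⟨s(u,v), h⟩) (.inr e)) = 0 := by
    rw [Finset.card_eq_zero]
    ext a
    exact ⟨fun h => False.elim (Finset.mem_filter.mp h).2, fun h => absurd h (Finset.notMem_empty a)⟩
  rw [h1, h2]

lemma edgeSemitotal_degree_inl {W : Type*} [Fintype W] (G : SimpleGraph W) (u : W) :
    (edgeSemitotal G).degree (Sum.inl u) = G.degree u := by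
  classical
  rw [degree_eq_card_filter, card_filter_sum_type]
  have h1 : #(Finset.univ.filter fun a : W => (edgeSemitotal G).Adj (.inl u) (.inl a)) = 0 := by
    rw [Finset.card_eq_zero]
    ext a
    exact ⟨fun h => False.elim (Finset.mem_filter.mp h).2, fun h => absurd h (Finset.notMem_empty a)⟩
  have h2 : #(Finset.univ.filter fun e : G.edgeSet => (edgeSemitotal G).Adj (.inl u) (.inr e))
      = G.degree u := by
    rw [← card_filter_mem_edge G u]
    congr 1
    exact Finset.filter_congr fun f _ => by simp [edgeSemitotal]
  rw [h1, h2]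
  omega

lemma edgeSemitotal_degree_inr {W : Type*} [Fintype W] (G : SimpleGraph W) (u v : W)
    (h : G.Adj u v) :
    (edgeSemitotal G).degree (Sum.inr (⟨s(u,v), h⟩ : G.edgeSet))
      = 2 + (G.degree u + G.degree v - 2) := by
  classical
  rw [degree_eq_card_filter, card_filter_sum_type]
  have h1 : #(Finset.univ.filter fun a : W =>
      (edgeSemitotal G).Adj (.inr ⟨s(u,v), h⟩) (.inl a)) = 2 := by
    rw [← card_filter_mem_sym2 h.ne]
    congr 1
    exact Finset.filter_congr fun a _ => by simp [edgeSemitotal]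
  have h2 : #(Finset.univ.filter fun e : G.edgeSet =>
      (edgeSemitotal G).Adj (.inr ⟨s(u,v), h⟩) (.inr e))
      = G.degree u + G.degree v - 2 := by
    rw [← card_filter_shares G u v h]
    congr 1
    refine Finset.filter_congr fun f _ => ?_
    show (_ ≠ _ ∧ _) ↔ _
    rfl
  rw [h1, h2]

lemma total_degree_inl {W : Type*} [Fintype W] (G : SimpleGraph W) (u : W) :
    (total G).degree (Sum.inl u) = 2 * G.degree u := by
  classical
  rw [degree_eq_card_filter, card_filter_sum_type]
  have h1 : #(Finset.univ.filter fun a : W => (total G).Adj (.inl u) (.inl a))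
      = G.degree u := by
    rw [degree_eq_card_filter]
    congr 1
  have h2 : #(Finset.univ.filter fun e : G.edgeSet => (total G).Adj (.inl u) (.inr e))
      = G.degree u := by
    rw [← card_filter_mem_edge G u]
    congr 1
    exact Finset.filter_congr fun f _ => by simp [total]
  rw [h1, h2]
  omega

lemma total_degree_inr {W : Type*} [Fintype W] (G : SimpleGraph W) (u v : W)
    (h : G.Adj u v) :
    (total G).degree (Sum.inr (⟨s(u,v), h⟩ : G.edgeSet))
      = 2 + (G.degree u + G.degree v - 2) := by
  classical
  rw [degree_eq_card_filter, card_filter_sum_type]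
  have h1 : #(Finset.univ.filter fun a : W =>
      (total G).Adj (.inr ⟨s(u,v), h⟩) (.inl a)) = 2 := by
    rw [← card_filter_mem_sym2 h.ne]
    congr 1
    exact Finset.filter_congr fun a _ => by simp [total]
  have h2 : #(Finset.univ.filter fun e : G.edgeSet =>
      (total G).Adj (.inr ⟨s(u,v), h⟩) (.inr e))
      = G.degree u + G.degree v - 2 := by
    rw [← card_filter_shares G u v h]
    congr 1
    refine Finset.filter_congr fun f _ => ?_
    show (_ ≠ _ ∧ _) ↔ _
    rfl
  rw [h1, h2]
lemma degree_congr {W : Type*} {H : SimpleGraph W} {x : W}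
    {i1 i2 : Fintype (H.neighborSet x)} :
    @SimpleGraph.degree W H x i1 = @SimpleGraph.degree W H x i2 := by congr!

lemma fincard_congr {α : Type*} (i1 i2 : Fintype α) :
    @Fintype.card α i1 = @Fintype.card α i2 := by congr!

lemma d_of {W : Type*} [Fintype W] (H : SimpleGraph W) (x : W) {k : ℕ}
    {i : Fintype (H.neighborSet x)} (h : @SimpleGraph.degree W H x i = k) :
    d H x = (k : ℤ) := by
  simp only [d]
  exact_mod_cast degree_congr.trans h

lemma edge_repr {W : Type*} (H : SimpleGraph W) (e : H.edgeSet) :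
    ∃ (u : W) (v : W) (h : H.Adj u v), e = ⟨s(u,v), h⟩ := by
  obtain ⟨e, he⟩ := e
  induction e using Sym2.ind with
  | _ u v => exact ⟨u, v, he, rfl⟩

lemma Fbar_of_const {W : Type*} [Fintype W] (H : SimpleGraph W) (k : ℕ)
    (h : ∀ x, d H x = (k : ℤ)) :
    Fbar H = (Fintype.card W : ℤ) * (((Fintype.card W : ℤ) - 1 - k) * (k : ℤ) ^ 2) := by
  rw [Fbar_eq]
  simp only [h]
  rw [Finset.sum_const, Finset.card_univ, nsmul_eq_mul]

lemma two_mul_card_edgeSet_of_const {W : Type*} [Fintype W] (H : SimpleGraph W) (k : ℕ)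
    (h : ∀ (x) (i : Fintype (H.neighborSet x)), @SimpleGraph.degree W H x i = k)
    (i2 : Fintype H.edgeSet) :
    2 * @Fintype.card H.edgeSet i2 = Fintype.card W * k := by
  classical
  have key := H.sum_degrees_eq_twice_card_edges
  rw [Finset.sum_congr rfl (fun x _ => h x _), Finset.sum_const, Finset.card_univ,
    smul_eq_mul] at key
  rw [key]
  congr 1
  convert (edgeFinset_card (G := H)).symm

theorem stmt19 (n : ℕ) (hn : 3 ≤ n) :
    Fbar (cycleGraph n).lineGraph = 4 * n * ((n : ℤ) - 3) ∧
    Fbar (subdivision (cycleGraph n)) = 8 * n * (2 * (n : ℤ) - 3) ∧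
    Fbar (vertexSemitotal (cycleGraph n)) = 4 * n * (10 * (n : ℤ) - 23) ∧
    Fbar (edgeSemitotal (cycleGraph n)) = 4 * n * (10 * (n : ℤ) - 23) ∧
    Fbar (total (cycleGraph n)) = 32 * n * (2 * (n : ℤ) - 5) ∧
    Fbar (paraline (cycleGraph n)) = 8 * n * (2 * (n : ℤ) - 3) := by
  classical
  obtain ⟨m, rfl⟩ : ∃ m, n = m + 3 := ⟨n - 3, by omega⟩
  set G := cycleGraph (m + 3) with hG
  have hdeg : ∀ (v : Fin (m + 3)) (i : Fintype (G.neighborSet v)),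
      @SimpleGraph.degree _ G v i = 2 := fun v i =>
    degree_congr.trans cycleGraph_degree_three_le
  have hE : ∀ i : Fintype G.edgeSet, @Fintype.card G.edgeSet i = m + 3 := by
    intro i
    have h2 := two_mul_card_edgeSet_of_const G 2 hdeg i
    rw [Fintype.card_fin] at h2
    omega
  have hcardSum : ∀ i : Fintype (Fin (m + 3) ⊕ G.edgeSet),
      @Fintype.card _ i = 2 * (m + 3) := by
    intro i
    have h1 : @Fintype.card _ i = Fintype.card (Fin (m + 3)) + Fintype.card G.edgeSet :=
      (fincard_congr i _).trans Fintype.card_sum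
    rw [h1, Fintype.card_fin, hE]
    ring
  -- line graph
  have hL : Fbar G.lineGraph = 4 * (m + 3 : ℤ) * ((m + 3 : ℤ) - 3) := by
    have hLdeg : ∀ x : G.edgeSet, d G.lineGraph x = (2 : ℤ) := by
      intro x
      obtain ⟨u, v, h, rfl⟩ := edge_repr G x
      have h1 := lineGraph_degree G u v h
      rw [hdeg, hdeg] at h1
      norm_num at h1
      exact d_of _ _ h1
    rw [Fbar_of_const _ 2 hLdeg, hE]
    push_cast
    ring
  -- subdivision
  have hSdeg : ∀ (x : Fin (m + 3) ⊕ G.edgeSet) (i : Fintype ((subdivision G).neighborSet x)),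
      @SimpleGraph.degree _ (subdivision G) x i = 2 := by
    rintro (u | e) i
    · exact degree_congr.trans ((subdivision_degree_inl G u).trans (hdeg u _))
    · obtain ⟨u, v, h, rfl⟩ := edge_repr G e
      exact degree_congr.trans (subdivision_degree_inr G u v h)
  have hS : Fbar (subdivision G) = 8 * (m + 3 : ℤ) * (2 * (m + 3 : ℤ) - 3) := by
    rw [Fbar_of_const _ 2 (fun x => d_of _ _ (hSdeg x inferInstance)), hcardSum]
    push_cast
    ring
  -- vertex-semitotal
  have hV : Fbar (vertexSemitotal G) = 4 * (m + 3 : ℤ) * (10 * (m + 3 : ℤ) - 23) := by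
    have hvinl : ∀ u : Fin (m + 3), d (vertexSemitotal G) (Sum.inl u) = (4 : ℤ) := by
      intro u
      have h1 := vertexSemitotal_degree_inl G u
      rw [hdeg] at h1
      norm_num at h1
      exact d_of _ _ h1
    have hvinr : ∀ e : G.edgeSet, d (vertexSemitotal G) (Sum.inr e) = (2 : ℤ) := by
      intro e
      obtain ⟨u, v, h, rfl⟩ := edge_repr G e
      exact d_of _ _ (vertexSemitotal_degree_inr G u v h)
    rw [Fbar_eq, ← Finset.univ_disjSum_univ, Finset.sum_disjSum]
    simp only [hvinl, hvinr, hcardSum]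
    rw [Finset.sum_const, Finset.sum_const, Finset.card_univ, Finset.card_univ,
      Fintype.card_fin, hE]
    push_cast
    ring
  -- edge-semitotal
  have hT2 : Fbar (edgeSemitotal G) = 4 * (m + 3 : ℤ) * (10 * (m + 3 : ℤ) - 23) := by
    have heinl : ∀ u : Fin (m + 3), d (edgeSemitotal G) (Sum.inl u) = (2 : ℤ) := fun u =>
      d_of _ _ ((edgeSemitotal_degree_inl G u).trans (hdeg u _))
    have heinr : ∀ e : G.edgeSet, d (edgeSemitotal G) (Sum.inr e) = (4 : ℤ) := by
      intro e
      obtain ⟨u, v, h, rfl⟩ := edge_repr G e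
      have h1 := edgeSemitotal_degree_inr G u v h
      rw [hdeg, hdeg] at h1
      norm_num at h1
      exact d_of _ _ h1
    rw [Fbar_eq, ← Finset.univ_disjSum_univ, Finset.sum_disjSum]
    simp only [heinl, heinr, hcardSum]
    rw [Finset.sum_const, Finset.sum_const, Finset.card_univ, Finset.card_univ,
      Fintype.card_fin, hE]
    push_cast
    ring
  -- total
  have hT : Fbar (total G) = 32 * (m + 3 : ℤ) * (2 * (m + 3 : ℤ) - 5) := by
    have htdeg : ∀ x : Fin (m + 3) ⊕ G.edgeSet, d (total G) x = (4 : ℤ) := by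
      rintro (u | e)
      · have h1 := total_degree_inl G u
        rw [hdeg] at h1
        norm_num at h1
        exact d_of _ _ h1
      · obtain ⟨u, v, h, rfl⟩ := edge_repr G e
        have h1 := total_degree_inr G u v h
        rw [hdeg, hdeg] at h1
        norm_num at h1
        exact d_of _ _ h1
    rw [Fbar_of_const _ 4 htdeg, hcardSum]
    push_cast
    ring
  -- paraline
  have hP : Fbar (paraline G) = 8 * (m + 3 : ℤ) * (2 * (m + 3 : ℤ) - 3) := by
    have hES : ∀ i : Fintype (subdivision G).edgeSet,
        @Fintype.card (subdivision G).edgeSet i = 2 * (m + 3) := by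
      intro i
      have h2 := two_mul_card_edgeSet_of_const (subdivision G) 2 hSdeg i
      rw [hcardSum] at h2
      omega
    have hpdeg : ∀ x : (subdivision G).edgeSet, d (paraline G) x = (2 : ℤ) := by
      intro x
      obtain ⟨a, b, h, rfl⟩ := edge_repr (subdivision G) x
      have h1 := lineGraph_degree (subdivision G) a b h
      rw [hSdeg, hSdeg] at h1
      norm_num at h1
      exact d_of _ _ h1
    rw [Fbar_of_const _ 2 hpdeg, hES]
    push_cast
    ring
  exact ⟨hL, hS, hV, hT2, hT, hP⟩

end Paper
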